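/- If the ring T_n(R) of n×n upper triangular matrices over R is inner McCoy (n ≥ 2), then R is inner McCoy. -/

import Mathlib

def IsInnerMcCoy (S : Type*) [Ring S] : Prop :=
  ∀ f g : Polynomial S, f ≠ 0 → g ≠ 0 → f * g * f = 0 →
    ∃ r : S, r ≠ 0 ∧ f * Polynomial.C r * f = 0

/-- The subring of upper triangular `n × n` matrices over `R`. -/
def UT (R : Type*) [Ring R] (n : ℕ) : Subring (Matrix (Fin n) (Fin n) R) where
  carrier := {M | ∀ i j : Fin n, j < i → M i j = 0}
  zero_mem' := fun _ _ _ => rfl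
  one_mem' := fun _ _ h => Matrix.one_apply_ne (ne_of_lt h).symm
  add_mem' := by
    intro A B hA hB i j hij
    simp [Matrix.add_apply, hA i j hij, hB i j hij]
  neg_mem' := by
    intro A hA i j hij
    simp [Matrix.neg_apply, hA i j hij]
  mul_mem' := by
    intro A B hA hB i j hij
    rw [Matrix.mul_apply]
    apply Finset.sum_eq_zero
    intro k _
    rcases lt_or_ge k i with hk | hk
    · rw [hA i k hk, zero_mul]
    · rw [hB k j (lt_of_lt_of_le hij hk), mul_zero]

/-- The scalar embedding of `R` into upper triangular matrices. -/
def scalarUT (R : Type*) [Ring R] (n : ℕ) : R →+* UT R n :=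
  (Matrix.scalar (Fin n)).codRestrict (UT R n).toSubsemiring
    (by
      intro r i j hij
      simp only [Matrix.scalar_apply]
      exact Matrix.diagonal_apply_ne _ hij.ne')

/-- If the upper triangular matrix ring `Tₙ(R)` is inner McCoy (`n ≥ 2`),
then `R` is inner McCoy. -/
theorem innerMcCoy_of_ut (R : Type*) [Ring R] (n : ℕ) (hn : 2 ≤ n)
    (h : IsInnerMcCoy (UT R n)) : IsInnerMcCoy R := by
  intro f g hf hg hfgf
  have hn1 : 0 < n := by omega
  set φ := scalarUT R n with hφdef
  have hcoe : ∀ r : R, ((φ r : UT R n) : Matrix (Fin n) (Fin n) R) = Matrix.scalar (Fin n) r :=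
    fun r => rfl
  have hφ : Function.Injective φ := by
    intro a b hab
    have := congrArg (fun M : UT R n =>
      (M : Matrix (Fin n) (Fin n) R) ⟨0, hn1⟩ ⟨0, hn1⟩) hab
    simpa [hcoe, Matrix.scalar_apply, Matrix.diagonal_apply_eq] using this
  have hmapinj : Function.Injective (Polynomial.map φ) :=
    Polynomial.map_injective φ hφ
  have hF : f.map φ ≠ 0 := fun h0 => hf (hmapinj (by simpa using h0))
  have hG : g.map φ ≠ 0 := fun h0 => hg (hmapinj (by simpa using h0))
  obtain ⟨A, hA0, hAeq⟩ := h (f.map φ) (g.map φ) hF hG (by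
    rw [← Polynomial.map_mul, ← Polynomial.map_mul, hfgf, Polynomial.map_zero])
  obtain ⟨p, q, hpq⟩ : ∃ p q, (A : Matrix (Fin n) (Fin n) R) p q ≠ 0 := by
    by_contra hc
    push_neg at hc
    apply hA0
    ext i j
    exact hc i j
  refine ⟨(A : Matrix (Fin n) (Fin n) R) p q, hpq, ?_⟩
  ext k
  have key : (f * Polynomial.C ((A : Matrix (Fin n) (Fin n) R) p q) * f).coeff k
      = (((f.map φ * Polynomial.C A * f.map φ).coeff k : UT R n) :
          Matrix (Fin n) (Fin n) R) p q := by
    rw [Polynomial.coeff_mul, Polynomial.coeff_mul]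
    rw [AddSubmonoidClass.coe_finset_sum, Matrix.sum_apply]
    apply Finset.sum_congr rfl
    intro x _
    rw [Polynomial.coeff_mul_C, Polynomial.coeff_mul_C, Polynomial.coeff_map,
      Polynomial.coeff_map]
    push_cast
    rw [hcoe, hcoe]
    simp [Matrix.scalar_apply, Matrix.mul_apply, Matrix.diagonal_apply, mul_assoc,
      Finset.sum_ite_eq, Finset.sum_ite_eq']
  rw [key, hAeq]
  simp
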